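/- Let (Ω, 𝒜, P) be a probability space and f : Ω → ℝ a measurable function such that ω ↦ exp(t·f(ω)) is P-integrable for all t in some open interval around 0. Let m := ∫ f dP and σ² := Var_P(f). For C > 0 define the robust value S_f(C) := sSup { ∫ f dQ : Q a probability measure on Ω with Q ≪ P and KL(Q‖P) ≤ C }. Then the function C ↦ (S_f(C) − m)/√C tends to √(2·σ²) as C → 0 from the right (i.e. along the filter 𝓝[>] 0); equivalently, S_f(C) = m + √(2·Var_P(f))·√C + o(√C) as C ↓ 0. -/

import Mathlib

open MeasureTheory ProbabilityTheory Filter Real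
open scoped Classical

/-- Kullback--Leibler divergence of `Q` from `P`: `∫ log (dQ/dP) dQ` when `Q ≪ P` and the
log-likelihood ratio is `Q`-integrable, and `⊤` otherwise. -/
noncomputable def klDiv {Ω : Type*} [MeasurableSpace Ω] (Q P : Measure Ω) : EReal :=
  if Q ≪ P ∧ Integrable (llr Q P) Q then ((∫ ω, llr Q P ω ∂Q : ℝ) : EReal) else ⊤

/-- The KL-ball robust value `S_f(C)`: the supremum of `∫ f dQ` over probability measures
`Q ≪ P` with `KL(Q‖P) ≤ C`. -/
noncomputable def robustValue {Ω : Type*} [MeasurableSpace Ω] (P : Measure Ω) (f : Ω → ℝ)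
    (C : ℝ) : ℝ :=
  sSup { x : ℝ | ∃ Q : Measure Ω, IsProbabilityMeasure Q ∧ Q ≪ P ∧
    klDiv Q P ≤ (C : EReal) ∧ x = ∫ ω, f ω ∂Q }

set_option linter.unusedSectionVars false

lemma myexp_abs_le (x : ℝ) : Real.exp |x| ≤ Real.exp x + Real.exp (-x) := by
  rcases abs_cases x with ⟨h, _⟩ | ⟨h, _⟩ <;> rw [h] <;>
    [exact le_add_of_nonneg_right (Real.exp_pos _).le;
     exact le_add_of_nonneg_left (Real.exp_pos _).le]

lemma myabs_exp_sub_one_le (x : ℝ) : |Real.exp x - 1| ≤ |x| * Real.exp |x| := by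
  rcases le_or_gt 0 x with h | h
  · rw [abs_of_nonneg h, abs_of_nonneg (by nlinarith [Real.add_one_le_exp x] : (0:ℝ) ≤ Real.exp x - 1)]
    have h1 := Real.add_one_le_exp (-x)
    have h2 := Real.exp_pos x
    have h3 : Real.exp (-x) * Real.exp x = 1 := by
      rw [← Real.exp_add]; simp
    nlinarith
  · rw [abs_of_neg h, abs_of_nonpos (by nlinarith [Real.exp_lt_one_iff.mpr h] : Real.exp x - 1 ≤ 0)]
    have h1 := Real.add_one_le_exp x
    have h2 : (1:ℝ) ≤ Real.exp (-x) := by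
      rw [Real.one_le_exp_iff]; linarith
    nlinarith

lemma mypow_le_factorial_mul_exp (p : ℕ) {y : ℝ} (hy : 0 ≤ y) :
    y ^ p ≤ p.factorial * Real.exp y := by
  have h : y ^ p / p.factorial ≤ ∑ i ∈ Finset.range (p + 1), y ^ i / i.factorial := by
    refine Finset.single_le_sum (f := fun i => y ^ i / i.factorial) ?_ (Finset.self_mem_range_succ p)
    intro i _; positivity
  have h2 := Real.sum_le_exp_of_nonneg hy (p + 1)
  have hp : (0:ℝ) < p.factorial := by positivity
  have := h.trans h2
  rw [div_le_iff₀ hp] at this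
  linarith

lemma mykey_bound (p : ℕ) {δ b u x : ℝ} (hδ : 0 < δ) (hu : |u| ≤ b) :
    |x| ^ p * Real.exp (u * x) ≤
      (p.factorial / δ ^ p) * (Real.exp ((b + δ) * x) + Real.exp (-((b + δ) * x))) := by
  have hb : 0 ≤ b := (abs_nonneg u).trans hu
  have h1 : |x| ^ p ≤ (p.factorial / δ ^ p) * Real.exp (δ * |x|) := by
    have := mypow_le_factorial_mul_exp p (y := δ * |x|) (by positivity)
    have hδp : (0:ℝ) < δ ^ p := by positivity
    rw [mul_pow] at this
    have h' : δ ^ p * |x| ^ p ≤ p.factorial * Real.exp (δ * |x|) := by nlinarith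
    rw [div_mul_eq_mul_div, le_div_iff₀ hδp]
    linarith
  have h2 : Real.exp (u * x) ≤ Real.exp (b * |x|) := by
    apply Real.exp_le_exp.2
    calc u * x ≤ |u * x| := le_abs_self _
    _ = |u| * |x| := abs_mul _ _
    _ ≤ b * |x| := by nlinarith [abs_nonneg x]
  have h3 : Real.exp (δ * |x|) * Real.exp (b * |x|) = Real.exp ((b + δ) * |x|) := by
    rw [← Real.exp_add]; ring_nf
  have h4 : Real.exp ((b + δ) * |x|) ≤ Real.exp ((b + δ) * x) + Real.exp (-((b + δ) * x)) := by
    have : (b + δ) * |x| = |(b + δ) * x| := by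
      rw [abs_mul, abs_of_nonneg (by linarith : (0:ℝ) ≤ b + δ)]
    rw [this]; exact myexp_abs_le _
  calc |x| ^ p * Real.exp (u * x)
      ≤ ((p.factorial / δ ^ p) * Real.exp (δ * |x|)) * Real.exp (b * |x|) := by
        apply mul_le_mul h1 h2 (Real.exp_pos _).le (by positivity)
    _ = (p.factorial / δ ^ p) * Real.exp ((b + δ) * |x|) := by rw [mul_assoc, h3]
    _ ≤ _ := mul_le_mul_of_nonneg_left h4 (by positivity)

lemma myyoung (u v : ℝ) (hu : 0 ≤ u) : u * v ≤ u * Real.log u - u + Real.exp v := by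
  rcases eq_or_lt_of_le hu with h | h
  · simp [← h, (Real.exp_pos v).le]
  · have h1 : Real.exp v = u * Real.exp (v - Real.log u) := by
      rw [Real.exp_sub, Real.exp_log h]
      field_simp
    have h2 := Real.add_one_le_exp (v - Real.log u)
    nlinarith
section MT

variable {Ω : Type*} [MeasurableSpace Ω] {P : MeasureTheory.Measure Ω}
  [MeasureTheory.IsProbabilityMeasure P] {f : Ω → ℝ} {ε : ℝ}

open MeasureTheory ProbabilityTheory Filter Real

lemma myint_pow_exp (hf : Measurable f) (hε : 0 < ε)
    (hint : ∀ t : ℝ, |t| < ε → Integrable (fun ω => Real.exp (t * f ω)) P) (p : ℕ) {u : ℝ}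
    (hu : |u| ≤ ε / 3) :
    Integrable (fun ω => |f ω| ^ p * Real.exp (u * f ω)) P := by
  have h23 : |(2:ℝ) * (ε/3)| < ε := by rw [abs_of_nonneg (by linarith)]; linarith
  have h23' : |(-(2 * (ε/3)) : ℝ)| < ε := by rw [abs_neg]; exact h23
  have hBint : Integrable (fun ω => ((p.factorial : ℝ) / (ε/3) ^ p) *
      (Real.exp ((ε/3 + ε/3) * f ω) + Real.exp (-((ε/3 + ε/3) * f ω)))) P := by
    have e1 : Integrable (fun ω => Real.exp ((ε/3 + ε/3) * f ω)) P := by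
      have := hint (2 * (ε/3)) h23
      convert this using 3 with ω; ring_nf
    have e2 : Integrable (fun ω => Real.exp (-((ε/3 + ε/3) * f ω))) P := by
      have := hint (-(2 * (ε/3))) h23'
      convert this using 3 with ω; ring_nf
    exact (e1.add e2).const_mul _
  refine hBint.mono' ?_ (ae_of_all _ fun ω => ?_)
  · exact ((hf.abs.pow_const p).mul ((hf.const_mul u).exp)).aestronglyMeasurable
  · rw [Real.norm_eq_abs, abs_of_nonneg (by positivity)]
    exact mykey_bound p (by linarith : (0:ℝ) < ε/3) hu

lemma myint_f (hf : Measurable f) (hε : 0 < ε)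
    (hint : ∀ t : ℝ, |t| < ε → Integrable (fun ω => Real.exp (t * f ω)) P) :
    Integrable f P := by
  have h := myint_pow_exp hf hε hint 1 (u := 0) (by simp; positivity)
  simp only [pow_one, zero_mul, Real.exp_zero, mul_one] at h
  rwa [← integrable_norm_iff hf.aestronglyMeasurable]

lemma myint_f2 (hf : Measurable f) (hε : 0 < ε)
    (hint : ∀ t : ℝ, |t| < ε → Integrable (fun ω => Real.exp (t * f ω)) P) :
    Integrable (fun ω => f ω ^ 2) P := by
  have h := myint_pow_exp hf hε hint 2 (u := 0) (by simp; positivity)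
  simp only [zero_mul, Real.exp_zero, mul_one, sq_abs] at h
  exact h

lemma mymem2 (hf : Measurable f) (hε : 0 < ε)
    (hint : ∀ t : ℝ, |t| < ε → Integrable (fun ω => Real.exp (t * f ω)) P) :
    MeasureTheory.MemLp f 2 P :=
  (memLp_two_iff_integrable_sq hf.aestronglyMeasurable).2 (myint_f2 hf hε hint)

end MT
section DV

variable {Ω : Type*} [MeasurableSpace Ω] {P : MeasureTheory.Measure Ω}
  [MeasureTheory.IsProbabilityMeasure P]

open MeasureTheory ProbabilityTheory Filter Real

lemma myDV {Q : MeasureTheory.Measure Ω} [IsProbabilityMeasure Q] (hQP : Q ≪ P)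
    (hllr : Integrable (llr Q P) Q) {g : Ω → ℝ} (hg : Measurable g)
    (hgi : Integrable (fun ω => Real.exp (g ω)) P)
    (hgi' : Integrable (fun ω => Real.exp (-g ω)) P) :
    Integrable g Q ∧
      ∫ ω, g ω ∂Q ≤ ∫ ω, llr Q P ω ∂Q + Real.log (∫ ω, Real.exp (g ω) ∂P) := by
  set D : Ω → ℝ := fun ω => (Q.rnDeriv P ω).toReal with hDdef
  have hD : Measurable D := (Measure.measurable_rnDeriv Q P).ennreal_toReal
  have hDll : Integrable (fun ω => D ω * llr Q P ω) P := by
    have := (MeasureTheory.integrable_rnDeriv_smul_iff hQP (f := llr Q P)).2 hllr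
    simpa [smul_eq_mul] using this
  have hDint : Integrable D P := Measure.integrable_toReal_rnDeriv
  -- Step A : D * |g| integrable w.r.t. P
  have hA : Integrable (fun ω => D ω * |g ω|) P := by
    refine Integrable.mono' ((hDll.sub hDint).add (hgi.add hgi'))
      ((hD.mul hg.abs).aestronglyMeasurable) (ae_of_all _ fun ω => ?_)
    rw [Real.norm_eq_abs, abs_of_nonneg (by positivity)]
    have h1 := myyoung (D ω) (|g ω|) ENNReal.toReal_nonneg
    have h2 := myexp_abs_le (g ω)
    have h3 : llr Q P ω = Real.log (D ω) := rfl
    simp only [Pi.add_apply, Pi.sub_apply]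
    rw [h3]
    linarith
  have hAg : Integrable g Q := by
    refine (MeasureTheory.integrable_rnDeriv_smul_iff hQP).1 ?_
    refine hA.mono ((hD.mul hg).aestronglyMeasurable) (ae_of_all _ fun ω => ?_)
    simp only [smul_eq_mul, Real.norm_eq_abs, abs_mul, abs_of_nonneg
      (ENNReal.toReal_nonneg : (0:ℝ) ≤ D ω), abs_abs]
    exact mul_le_mul_of_nonneg_right (le_abs_self _) (abs_nonneg _)
  refine ⟨hAg, ?_⟩
  -- Step C : pointwise bound over P
  have hpt : ∀ᵐ ω ∂P, D ω • Real.exp (g ω - llr Q P ω) ≤ Real.exp (g ω) := by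
    filter_upwards with ω
    rcases eq_or_lt_of_le (ENNReal.toReal_nonneg : (0:ℝ) ≤ D ω) with h0 | h0
    · rw [smul_eq_mul, show D ω = 0 from h0.symm, zero_mul]; exact (Real.exp_pos _).le
    · have h3 : llr Q P ω = Real.log (D ω) := rfl
      rw [smul_eq_mul, h3, Real.exp_sub, Real.exp_log h0, mul_div_cancel₀ _ h0.ne']
  have hCint : Integrable (fun ω => D ω • Real.exp (g ω - llr Q P ω)) P := by
    refine hgi.mono' ((hD.mul ((hg.sub (measurable_llr Q P)).exp)).aestronglyMeasurable)
      (hpt.mono fun ω hω => ?_)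
    rwa [Real.norm_eq_abs, abs_of_nonneg (by positivity)]
  have hExpQ : Integrable (fun ω => Real.exp (g ω - llr Q P ω)) Q :=
    (MeasureTheory.integrable_rnDeriv_smul_iff hQP).1 hCint
  set c : ℝ := ∫ ω, Real.exp (g ω - llr Q P ω) ∂Q with hcdef
  have hc_eq : c = ∫ ω, D ω • Real.exp (g ω - llr Q P ω) ∂P :=
    (MeasureTheory.integral_rnDeriv_smul hQP).symm
  have hcE : c ≤ ∫ ω, Real.exp (g ω) ∂P := by
    rw [hc_eq]; exact integral_mono_ae hCint hgi hpt
  have hc0 : 0 < c := integral_exp_pos hExpQ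
  -- Step D : pointwise log bound
  have hpt2 : ∀ ω, g ω - llr Q P ω ≤
      Real.log c + (Real.exp (g ω - llr Q P ω) - c) / c := by
    intro ω
    have h1 := Real.log_le_sub_one_of_pos
      (x := Real.exp (g ω - llr Q P ω) / c) (by positivity)
    rw [Real.log_div (Real.exp_ne_zero _) hc0.ne', Real.log_exp] at h1
    have h2 : (Real.exp (g ω - llr Q P ω) - c) / c
        = Real.exp (g ω - llr Q P ω) / c - 1 := by
      field_simp
    linarith [h2 ▸ h1]
  have hsub : Integrable (fun ω => Real.exp (g ω - llr Q P ω) - c) Q := by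
    exact hExpQ.sub (integrable_const c)
  have hint2 : Integrable (fun ω => Real.log c
      + (Real.exp (g ω - llr Q P ω) - c) / c) Q := by
    exact (integrable_const _).add (hsub.div_const c)
  have hmain : ∫ ω, g ω - llr Q P ω ∂Q ≤ Real.log c := by
    calc ∫ ω, g ω - llr Q P ω ∂Q
        ≤ ∫ ω, Real.log c + (Real.exp (g ω - llr Q P ω) - c) / c ∂Q :=
          integral_mono_ae (hAg.sub hllr) hint2 (ae_of_all _ hpt2)
      _ = Real.log c + ((∫ ω, Real.exp (g ω - llr Q P ω) ∂Q) - c) / c := by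
          rw [integral_add (integrable_const _) (hsub.div_const c),
            integral_const, integral_div, integral_sub hExpQ (integrable_const c),
            integral_const]
          simp [measure_univ]
      _ = Real.log c := by rw [← hcdef]; simp
  rw [integral_sub hAg hllr] at hmain
  have := Real.log_le_log hc0 hcE
  linarith

end DV
section Tilted

variable {Ω : Type*} [MeasurableSpace Ω] {P : MeasureTheory.Measure Ω}
  [MeasureTheory.IsProbabilityMeasure P] {f : Ω → ℝ} {ε : ℝ}

open MeasureTheory ProbabilityTheory Filter Real

lemma myklDiv_le {Q : MeasureTheory.Measure Ω} {C : ℝ} (h : klDiv Q P ≤ (C : EReal)) :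
    Q ≪ P ∧ Integrable (llr Q P) Q ∧ ∫ ω, llr Q P ω ∂Q ≤ C := by
  by_cases hc : Q ≪ P ∧ Integrable (llr Q P) Q
  · refine ⟨hc.1, hc.2, ?_⟩
    rw [klDiv, if_pos hc] at h
    exact_mod_cast h
  · rw [klDiv, if_neg hc] at h
    exact absurd h ((EReal.coe_lt_top C).not_ge)

lemma myint_fe (hf : Measurable f) (hε : 0 < ε)
    (hint : ∀ t : ℝ, |t| < ε → Integrable (fun ω => Real.exp (t * f ω)) P) {t : ℝ}
    (ht : |t| ≤ ε / 3) :
    Integrable (fun ω => f ω * Real.exp (t * f ω)) P := by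
  have h1 := myint_pow_exp hf hε hint 1 (u := t) ht
  simp only [pow_one] at h1
  refine h1.mono ((hf.mul ((hf.const_mul t).exp)).aestronglyMeasurable)
    (ae_of_all _ fun ω => ?_)
  rw [Real.norm_eq_abs, Real.norm_eq_abs, abs_mul, abs_of_nonneg (by positivity :
    (0:ℝ) ≤ |f ω| * Real.exp (t * f ω)), abs_of_pos (Real.exp_pos _)]

lemma mytilted_props (hf : Measurable f) (hε : 0 < ε)
    (hint : ∀ t : ℝ, |t| < ε → Integrable (fun ω => Real.exp (t * f ω)) P) {t : ℝ}
    (ht : 0 < t) (ht' : t ≤ ε / 3) :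
    IsProbabilityMeasure (P.tilted (fun ω => t * f ω)) ∧
    (∫ ω, f ω ∂(P.tilted (fun ω => t * f ω)))
      = (∫ ω, f ω * Real.exp (t * f ω) ∂P) / (∫ ω, Real.exp (t * f ω) ∂P) ∧
    klDiv (P.tilted (fun ω => t * f ω)) P =
      ((t * ((∫ ω, f ω * Real.exp (t * f ω) ∂P) / (∫ ω, Real.exp (t * f ω) ∂P))
        - Real.log (∫ ω, Real.exp (t * f ω) ∂P) : ℝ) : EReal) := by
  have htabs : |t| ≤ ε / 3 := by rw [abs_of_pos ht]; exact ht'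
  have htlt : |t| < ε := lt_of_le_of_lt htabs (by linarith)
  have he : Integrable (fun ω => Real.exp (t * f ω)) P := hint t htlt
  set Q := P.tilted (fun ω => t * f ω) with hQdef
  have hQprob : IsProbabilityMeasure Q := isProbabilityMeasure_tilted he
  have hQP : Q ≪ P := tilted_absolutelyContinuous P _
  have hfe := myint_fe hf hε hint htabs
  have hZpos : 0 < ∫ ω, Real.exp (t * f ω) ∂P := integral_exp_pos he
  have hllr_ae : llr Q P =ᵐ[P] fun ω => t * f ω - Real.log (∫ ω, Real.exp (t * f ω) ∂P) := by
    have := log_rnDeriv_tilted_left_self (μ := P) (f := fun ω => t * f ω) he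
    exact this
  have hllr_aeQ : llr Q P =ᵐ[Q] fun ω => t * f ω - Real.log (∫ ω, Real.exp (t * f ω) ∂P) :=
    hllr_ae.filter_mono hQP.ae_le
  have hfQ : Integrable f Q := by
    rw [hQdef, Measure.tilted]
    rw [integrable_withDensity_iff (((hf.const_mul t).exp.div_const _).ennreal_ofReal)
      (ae_of_all _ fun ω => ENNReal.ofReal_lt_top)]
    refine (hfe.div_const (∫ ω, Real.exp (t * f ω) ∂P)).congr (ae_of_all _ fun ω => ?_)
    have h2 : (ENNReal.ofReal (Real.exp (t * f ω) / ∫ x, Real.exp (t * f x) ∂P)).toReal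
        = Real.exp (t * f ω) / ∫ x, Real.exp (t * f x) ∂P := ENNReal.toReal_ofReal (by positivity)
    simp only [h2]
    ring
  have hintllr : Integrable (llr Q P) Q :=
    (((hfQ.const_mul t)).sub (integrable_const _)).congr hllr_aeQ.symm
  have hmean : (∫ ω, f ω ∂Q)
      = (∫ ω, f ω * Real.exp (t * f ω) ∂P) / (∫ ω, Real.exp (t * f ω) ∂P) := by
    rw [hQdef, integral_tilted]
    simp_rw [smul_eq_mul]
    rw [← integral_div]
    congr 1 with ω
    ring
  have hKL : ∫ ω, llr Q P ω ∂Q =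
      t * ((∫ ω, f ω * Real.exp (t * f ω) ∂P) / (∫ ω, Real.exp (t * f ω) ∂P))
        - Real.log (∫ ω, Real.exp (t * f ω) ∂P) := by
    rw [integral_congr_ae hllr_aeQ,
      integral_sub (hfQ.const_mul t) (integrable_const _), integral_const_mul,
      integral_const, probReal_univ, hmean]
    simp
  refine ⟨hQprob, hmean, ?_⟩
  rw [klDiv, if_pos ⟨hQP, hintllr⟩, hKL]

end Tilted
section RV

variable {Ω : Type*} [MeasurableSpace Ω] {P : MeasureTheory.Measure Ω}
  [MeasureTheory.IsProbabilityMeasure P] {f : Ω → ℝ} {ε : ℝ}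

open MeasureTheory ProbabilityTheory Filter Real

lemma my_mem_self {C : ℝ} (hC : 0 ≤ C) :
    (∫ ω, f ω ∂P) ∈ { x : ℝ | ∃ Q : MeasureTheory.Measure Ω, IsProbabilityMeasure Q ∧ Q ≪ P ∧
      klDiv Q P ≤ (C : EReal) ∧ x = ∫ ω, f ω ∂Q } := by
  have h0 : llr P P =ᵐ[P] (fun _ => (0:ℝ)) := by
    filter_upwards [Measure.rnDeriv_self P] with ω hω
    simp [llr, hω]
  refine ⟨P, inferInstance, Measure.AbsolutelyContinuous.rfl, ?_, rfl⟩
  rw [klDiv, if_pos ⟨Measure.AbsolutelyContinuous.rfl, (integrable_const (0:ℝ)).congr h0.symm⟩,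
    integral_congr_ae h0, integral_zero]
  exact_mod_cast hC

lemma my_upper (hf : Measurable f) (hε : 0 < ε)
    (hint : ∀ t : ℝ, |t| < ε → Integrable (fun ω => Real.exp (t * f ω)) P) {C t : ℝ}
    (ht : 0 < t) (ht' : t ≤ ε / 3) {x : ℝ}
    (hx : x ∈ { x : ℝ | ∃ Q : MeasureTheory.Measure Ω, IsProbabilityMeasure Q ∧ Q ≪ P ∧
      klDiv Q P ≤ (C : EReal) ∧ x = ∫ ω, f ω ∂Q }) :
    x ≤ (C + Real.log (∫ ω, Real.exp (t * f ω) ∂P)) / t := by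
  obtain ⟨Q, hQprob, hQP, hkl, rfl⟩ := hx
  obtain ⟨_, hllrQ, hklle⟩ := myklDiv_le hkl
  have htlt : |t| < ε := by rw [abs_of_pos ht]; linarith
  have hneg : Integrable (fun ω => Real.exp (-(t * f ω))) P := by
    have := hint (-t) (by rwa [abs_neg])
    simpa [neg_mul] using this
  have hDV := (myDV hQP hllrQ (hf.const_mul t) (hint t htlt) hneg).2
  rw [integral_const_mul] at hDV
  rw [le_div_iff₀ ht, mul_comm]
  linarith

lemma my_bdd (hf : Measurable f) (hε : 0 < ε)
    (hint : ∀ t : ℝ, |t| < ε → Integrable (fun ω => Real.exp (t * f ω)) P) (C : ℝ) :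
    BddAbove { x : ℝ | ∃ Q : MeasureTheory.Measure Ω, IsProbabilityMeasure Q ∧ Q ≪ P ∧
      klDiv Q P ≤ (C : EReal) ∧ x = ∫ ω, f ω ∂Q } :=
  ⟨(C + Real.log (∫ ω, Real.exp ((ε/3) * f ω) ∂P)) / (ε/3),
    fun _ hx => my_upper hf hε hint (by linarith) le_rfl hx⟩

lemma my_lower (hf : Measurable f) (hε : 0 < ε)
    (hint : ∀ t : ℝ, |t| < ε → Integrable (fun ω => Real.exp (t * f ω)) P) {C t : ℝ}
    (ht : 0 < t) (ht' : t ≤ ε / 3)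
    (hKLle : t * ((∫ ω, f ω * Real.exp (t * f ω) ∂P) / (∫ ω, Real.exp (t * f ω) ∂P))
      - Real.log (∫ ω, Real.exp (t * f ω) ∂P) ≤ C) :
    ((∫ ω, f ω * Real.exp (t * f ω) ∂P) / (∫ ω, Real.exp (t * f ω) ∂P))
      ∈ { x : ℝ | ∃ Q : MeasureTheory.Measure Ω, IsProbabilityMeasure Q ∧ Q ≪ P ∧
      klDiv Q P ≤ (C : EReal) ∧ x = ∫ ω, f ω ∂Q } := by
  obtain ⟨hprob, hmean, hkl⟩ := mytilted_props hf hε hint ht ht'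
  exact ⟨P.tilted (fun ω => t * f ω), hprob, tilted_absolutelyContinuous P _,
    by rw [hkl]; exact_mod_cast hKLle, hmean.symm⟩

end RV
section Limits

variable {Ω : Type*} [MeasurableSpace Ω] {P : MeasureTheory.Measure Ω}
  [MeasureTheory.IsProbabilityMeasure P] {f : Ω → ℝ} {ε : ℝ}

open MeasureTheory ProbabilityTheory Filter Real

lemma myZ_lim (hf : Measurable f) (hε : 0 < ε)
    (hint : ∀ t : ℝ, |t| < ε → Integrable (fun ω => Real.exp (t * f ω)) P) :
    Tendsto (fun t : ℝ => ∫ ω, Real.exp (t * f ω) ∂P) (nhdsWithin 0 (Set.Ioi 0)) (nhds 1) := by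
  have h13 : |(ε/3 : ℝ)| < ε := by rw [abs_of_pos (by linarith)]; linarith
  have h13' : |(-(ε/3) : ℝ)| < ε := by rwa [abs_neg]
  have hbound : Integrable (fun ω => Real.exp ((ε/3) * f ω) + Real.exp ((-(ε/3)) * f ω)) P :=
    (hint _ h13).add (hint _ h13')
  have key : Tendsto (fun t : ℝ => ∫ ω, Real.exp (t * f ω) ∂P) (nhdsWithin 0 (Set.Ioi 0))
      (nhds (∫ _ω, (1:ℝ) ∂P)) := by
    refine tendsto_integral_filter_of_dominated_convergence _ ?_ ?_ hbound ?_
    · exact Eventually.of_forall fun t => ((hf.const_mul t).exp).aestronglyMeasurable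
    · filter_upwards [Ioo_mem_nhdsGT_of_mem
        (show (0:ℝ) ∈ Set.Ico 0 (ε/3) by constructor <;> [rfl; linarith])] with t ht
      refine ae_of_all _ fun ω => ?_
      rw [Real.norm_eq_abs, abs_of_pos (Real.exp_pos _)]
      have h1 : t * f ω ≤ |(ε/3) * f ω| := by
        calc t * f ω ≤ |t * f ω| := le_abs_self _
        _ = |t| * |f ω| := abs_mul _ _
        _ ≤ (ε/3) * |f ω| := by
            apply mul_le_mul_of_nonneg_right _ (abs_nonneg _)
            rw [abs_of_pos ht.1]; exact ht.2.le
        _ = |(ε/3) * f ω| := by rw [abs_mul, abs_of_pos (by linarith : (0:ℝ) < ε/3)]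
      calc Real.exp (t * f ω) ≤ Real.exp |(ε/3) * f ω| := Real.exp_le_exp.2 h1
      _ ≤ Real.exp ((ε/3) * f ω) + Real.exp (-((ε/3) * f ω)) := myexp_abs_le _
      _ = Real.exp ((ε/3) * f ω) + Real.exp ((-(ε/3)) * f ω) := by rw [neg_mul]
    · refine ae_of_all _ fun ω => ?_
      have hc : Continuous (fun t : ℝ => Real.exp (t * f ω)) :=
        Real.continuous_exp.comp (continuous_id.mul continuous_const)
      have : Tendsto (fun t : ℝ => Real.exp (t * f ω)) (nhds 0) (nhds 1) := by
        simpa using hc.tendsto (0:ℝ)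
      exact this.mono_left nhdsWithin_le_nhds
  simpa [measure_univ] using key

lemma myslope_exp (a : ℝ) :
    Tendsto (fun t : ℝ => (Real.exp (t * a) - 1) / t) (nhdsWithin 0 (Set.Ioi 0)) (nhds a) := by
  have hD : HasDerivAt (fun t : ℝ => Real.exp (t * a)) a 0 := by
    have := (hasDerivAt_mul_const a (x := (0:ℝ))).exp
    simpa using this
  have h1 := hasDerivAt_iff_tendsto_slope.1 hD
  have h2 : Tendsto (slope (fun t : ℝ => Real.exp (t * a)) 0) (nhdsWithin 0 (Set.Ioi 0))
      (nhds a) := h1.mono_left (nhdsWithin_mono 0 fun x hx => ne_of_gt hx)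
  refine h2.congr' ?_
  filter_upwards [self_mem_nhdsWithin] with t ht
  simp [slope_def_field]

lemma myq_lim (hf : Measurable f) (hε : 0 < ε)
    (hint : ∀ t : ℝ, |t| < ε → Integrable (fun ω => Real.exp (t * f ω)) P) :
    Tendsto (fun t : ℝ => ∫ ω, (f ω - (∫ x, f x ∂P)) * ((Real.exp (t * f ω) - 1) / t) ∂P)
      (nhdsWithin 0 (Set.Ioi 0))
      (nhds ((∫ ω, f ω ^ 2 ∂P) - (∫ x, f x ∂P) ^ 2)) := by
  set m := ∫ x, f x ∂P with hm
  have h2 : Integrable (fun ω => |f ω| ^ 2 * Real.exp ((ε/3) * f ω)) P :=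
    myint_pow_exp hf hε hint 2 (by rw [abs_of_pos (by linarith)])
  have h2' : Integrable (fun ω => |f ω| ^ 2 * Real.exp ((-(ε/3)) * f ω)) P :=
    myint_pow_exp hf hε hint 2 (by rw [abs_neg, abs_of_pos (by linarith)])
  have h1 : Integrable (fun ω => |f ω| ^ 1 * Real.exp ((ε/3) * f ω)) P :=
    myint_pow_exp hf hε hint 1 (by rw [abs_of_pos (by linarith)])
  have h1' : Integrable (fun ω => |f ω| ^ 1 * Real.exp ((-(ε/3)) * f ω)) P :=
    myint_pow_exp hf hε hint 1 (by rw [abs_neg, abs_of_pos (by linarith)])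
  have hbound : Integrable (fun ω =>
      (|f ω| ^ 2 * Real.exp ((ε/3) * f ω) + |f ω| ^ 2 * Real.exp ((-(ε/3)) * f ω))
      + (|m| * (|f ω| ^ 1 * Real.exp ((ε/3) * f ω))
        + |m| * (|f ω| ^ 1 * Real.exp ((-(ε/3)) * f ω)))) P :=
    (h2.add h2').add ((h1.const_mul _).add (h1'.const_mul _))
  have key : Tendsto (fun t : ℝ => ∫ ω, (f ω - m) * ((Real.exp (t * f ω) - 1) / t) ∂P)
      (nhdsWithin 0 (Set.Ioi 0)) (nhds (∫ ω, (f ω - m) * f ω ∂P)) := by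
    refine tendsto_integral_filter_of_dominated_convergence _ ?_ ?_ hbound ?_
    · refine Eventually.of_forall fun t => ?_
      exact ((hf.sub measurable_const).mul
        (((hf.const_mul t).exp.sub measurable_const).div_const t)).aestronglyMeasurable
    · filter_upwards [Ioo_mem_nhdsGT_of_mem
        (show (0:ℝ) ∈ Set.Ico 0 (ε/3) by constructor <;> [rfl; linarith])] with t ht
      refine ae_of_all _ fun ω => ?_
      set a := f ω with ha
      have hE : Real.exp |t * a| ≤ Real.exp ((ε/3) * a) + Real.exp ((-(ε/3)) * a) := by
        have h1 : |t * a| ≤ |(ε/3) * a| := by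
          rw [abs_mul, abs_mul]
          apply mul_le_mul_of_nonneg_right _ (abs_nonneg _)
          rw [abs_of_pos ht.1, abs_of_pos (by linarith : (0:ℝ) < ε/3)]; exact ht.2.le
        calc Real.exp |t * a| ≤ Real.exp |(ε/3) * a| := Real.exp_le_exp.2 h1
        _ ≤ Real.exp ((ε/3) * a) + Real.exp (-((ε/3) * a)) := myexp_abs_le _
        _ = Real.exp ((ε/3) * a) + Real.exp ((-(ε/3)) * a) := by rw [neg_mul]
      set E := Real.exp ((ε/3) * a) + Real.exp ((-(ε/3)) * a) with hEdef
      have hstep1 : |(Real.exp (t * a) - 1) / t| ≤ |a| * E := by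
        rw [abs_div, abs_of_pos ht.1, div_le_iff₀ ht.1]
        calc |Real.exp (t * a) - 1| ≤ |t * a| * Real.exp |t * a| := myabs_exp_sub_one_le _
        _ ≤ |t * a| * E := by
            apply mul_le_mul_of_nonneg_left hE (abs_nonneg _)
        _ = |a| * E * t := by
            rw [abs_mul, abs_of_pos ht.1]; ring
      have hstep2 : |f ω - m| ≤ |a| + |m| := abs_sub _ _
      have hEpos : 0 < E := by positivity
      calc ‖(f ω - m) * ((Real.exp (t * a) - 1) / t)‖
          = |f ω - m| * |(Real.exp (t * a) - 1) / t| := by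
            rw [Real.norm_eq_abs, abs_mul]
        _ ≤ (|a| + |m|) * (|a| * E) := by
            apply mul_le_mul hstep2 hstep1 (abs_nonneg _) (by positivity)
        _ = (|a| ^ 2 * Real.exp ((ε/3) * a) + |a| ^ 2 * Real.exp ((-(ε/3)) * a))
            + (|m| * (|a| ^ 1 * Real.exp ((ε/3) * a))
              + |m| * (|a| ^ 1 * Real.exp ((-(ε/3)) * a))) := by
            rw [hEdef]; ring
    · refine ae_of_all _ fun ω => ?_
      exact (myslope_exp (f ω)).const_mul _
  have hfi := myint_f hf hε hint
  have hf2 := myint_f2 hf hε hint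
  have : ∫ ω, (f ω - m) * f ω ∂P = (∫ ω, f ω ^ 2 ∂P) - m ^ 2 := by
    have heq : ∀ ω, (f ω - m) * f ω = f ω ^ 2 - m * f ω := fun ω => by ring
    simp_rw [heq]
    rw [integral_sub hf2 (hfi.const_mul m), integral_const_mul, ← hm]
    ring
  rwa [this] at key

end Limits
section Limits2

variable {Ω : Type*} [MeasurableSpace Ω] {P : MeasureTheory.Measure Ω}
  [MeasureTheory.IsProbabilityMeasure P] {f : Ω → ℝ} {ε : ℝ}

open MeasureTheory ProbabilityTheory Filter Real

lemma myq_eq (hf : Measurable f) (hε : 0 < ε)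
    (hint : ∀ t : ℝ, |t| < ε → Integrable (fun ω => Real.exp (t * f ω)) P) {t : ℝ}
    (ht : 0 < t) (ht' : t ≤ ε / 3) :
    ∫ ω, (f ω - (∫ x, f x ∂P)) * ((Real.exp (t * f ω) - 1) / t) ∂P
      = ((∫ ω, f ω * Real.exp (t * f ω) ∂P)
          - (∫ x, f x ∂P) * (∫ ω, Real.exp (t * f ω) ∂P)) / t := by
  set m := ∫ x, f x ∂P with hm
  have htlt : |t| < ε := by rw [abs_of_pos ht]; linarith
  have he := hint t htlt
  have hfe := myint_fe hf hε hint (by rw [abs_of_pos ht]; exact ht')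
  have hfi := myint_f hf hε hint
  have heq : ∀ ω, (f ω - m) * ((Real.exp (t * f ω) - 1) / t)
      = ((f ω * Real.exp (t * f ω) - f ω) - (m * Real.exp (t * f ω) - m)) / t := by
    intro ω
    field_simp
  have hA1 : Integrable (fun ω => f ω * Real.exp (t * f ω) - f ω) P := by exact hfe.sub hfi
  have hA2 : Integrable (fun ω => m * Real.exp (t * f ω) - m) P := by
    exact (he.const_mul m).sub (integrable_const m)
  simp_rw [heq]
  rw [integral_div, integral_sub hA1 hA2,
    integral_sub hfe hfi, integral_sub (he.const_mul m) (integrable_const m),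
    integral_const_mul, integral_const, probReal_univ]
  simp only [ENNReal.toReal_one, smul_eq_mul, one_mul, ← hm]
  congr 1
  ring

lemma myZ_deriv (hf : Measurable f) (hε : 0 < ε)
    (hint : ∀ t : ℝ, |t| < ε → Integrable (fun ω => Real.exp (t * f ω)) P) {x : ℝ}
    (hx : x ∈ Set.Ioo 0 (ε/3)) :
    HasDerivAt (fun t => ∫ ω, Real.exp (t * f ω) ∂P)
      (∫ ω, f ω * Real.exp (x * f ω) ∂P) x := by
  have hr0 : 0 < min x (ε/3 - x) := lt_min hx.1 (by linarith [hx.2])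
  have h23 : |(2:ℝ) * (ε/3)| < ε := by rw [abs_of_nonneg (by linarith)]; linarith
  have h23' : |(-(2 * (ε/3)) : ℝ)| < ε := by rw [abs_neg]; exact h23
  have hBint : Integrable (fun ω => ((Nat.factorial 1 : ℝ) / (ε/3) ^ 1) *
      (Real.exp ((ε/3 + ε/3) * f ω) + Real.exp (-((ε/3 + ε/3) * f ω)))) P := by
    have e1 : Integrable (fun ω => Real.exp ((ε/3 + ε/3) * f ω)) P := by
      have := hint (2 * (ε/3)) h23
      convert this using 3 with ω; ring_nf
    have e2 : Integrable (fun ω => Real.exp (-((ε/3 + ε/3) * f ω))) P := by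
      have := hint (-(2 * (ε/3))) h23'
      convert this using 3 with ω; ring_nf
    exact (e1.add e2).const_mul _
  have hxlt : |x| < ε := by rw [abs_of_pos hx.1]; linarith [hx.2]
  refine (hasDerivAt_integral_of_dominated_loc_of_deriv_le (Metric.ball_mem_nhds x hr0)
    (F := fun t ω => Real.exp (t * f ω)) (F' := fun t ω => f ω * Real.exp (t * f ω))
    (Eventually.of_forall fun t => ((hf.const_mul t).exp).aestronglyMeasurable)
    (hint x hxlt)
    ((hf.mul ((hf.const_mul x).exp)).aestronglyMeasurable)
    (ae_of_all _ fun ω t htb => ?_) hBint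
    (ae_of_all _ fun ω t _ => ?_)).2
  · have htI : 0 < t ∧ t ≤ ε/3 := by
      rw [Metric.mem_ball, Real.dist_eq, abs_sub_lt_iff] at htb
      constructor
      · have := min_le_left x (ε/3 - x); linarith [htb.2]
      · have := min_le_right x (ε/3 - x); linarith [htb.1]
    have hu : |t| ≤ ε/3 := by rw [abs_of_pos htI.1]; exact htI.2
    have := mykey_bound (p := 1) (x := f ω) (u := t)
      (show (0:ℝ) < ε/3 by linarith) hu
    rw [Real.norm_eq_abs, abs_mul, abs_of_pos (Real.exp_pos _)]
    calc |f ω| * Real.exp (t * f ω) = |f ω| ^ 1 * Real.exp (t * f ω) := by rw [pow_one]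
    _ ≤ _ := this
  · have := (hasDerivAt_mul_const (f ω) (x := t)).exp
    simpa [mul_comm] using this

lemma myLam_lim (hf : Measurable f) (hε : 0 < ε)
    (hint : ∀ t : ℝ, |t| < ε → Integrable (fun ω => Real.exp (t * f ω)) P) :
    Tendsto (fun t : ℝ => (Real.log (∫ ω, Real.exp (t * f ω) ∂P) - (∫ x, f x ∂P) * t) / t ^ 2)
      (nhdsWithin 0 (Set.Ioi 0))
      (nhds (((∫ ω, f ω ^ 2 ∂P) - (∫ x, f x ∂P) ^ 2) / 2)) := by
  have hZpos : ∀ t : ℝ, |t| < ε → 0 < ∫ ω, Real.exp (t * f ω) ∂P :=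
    fun t h => integral_exp_pos (hint t h)
  have hε3 : (0:ℝ) < ε/3 := by linarith
  have habs : ∀ x : ℝ, x ∈ Set.Ioo (0:ℝ) (ε/3) → |x| < ε := fun x hx => by
    rw [abs_of_pos hx.1]; linarith [hx.2]
  refine HasDerivAt.lhopital_zero_right_on_Ioo hε3
    (f' := fun x => (∫ ω, f ω * Real.exp (x * f ω) ∂P) / (∫ ω, Real.exp (x * f ω) ∂P)
      - (∫ x, f x ∂P))
    (g' := fun x => 2 * x) ?_ ?_ ?_ ?_ ?_ ?_
  · intro x hx
    refine ((myZ_deriv hf hε hint hx).log (hZpos x (habs x hx)).ne').sub ?_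
    simpa using (hasDerivAt_id x).const_mul (∫ x, f x ∂P)
  · intro x _
    simpa using hasDerivAt_pow 2 x
  · intro x hx
    exact mul_ne_zero two_ne_zero (ne_of_gt hx.1)
  · have h1 : Tendsto (fun t : ℝ => Real.log (∫ ω, Real.exp (t * f ω) ∂P))
        (nhdsWithin 0 (Set.Ioi 0)) (nhds 0) := by
      have := (Real.continuousAt_log one_ne_zero).tendsto.comp (myZ_lim hf hε hint)
      simpa [Function.comp_def] using this
    have h2 : Tendsto (fun t : ℝ => (∫ x, f x ∂P) * t) (nhdsWithin 0 (Set.Ioi 0)) (nhds 0) := by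
      have : Tendsto (fun t : ℝ => (∫ x, f x ∂P) * t) (nhds 0) (nhds ((∫ x, f x ∂P) * 0)) :=
        (continuous_const.mul continuous_id).tendsto 0
      simpa using this.mono_left nhdsWithin_le_nhds
    simpa using h1.sub h2
  · have : Tendsto (fun t : ℝ => t ^ 2) (nhds 0) (nhds ((0:ℝ) ^ 2)) :=
      (continuous_pow 2).tendsto 0
    simpa using this.mono_left nhdsWithin_le_nhds
  · have base : Tendsto (fun x : ℝ =>
        (∫ ω, (f ω - (∫ x, f x ∂P)) * ((Real.exp (x * f ω) - 1) / x) ∂P)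
          / (2 * ∫ ω, Real.exp (x * f ω) ∂P))
        (nhdsWithin 0 (Set.Ioi 0))
        (nhds (((∫ ω, f ω ^ 2 ∂P) - (∫ x, f x ∂P) ^ 2) / (2 * 1))) :=
      (myq_lim hf hε hint).div ((myZ_lim hf hε hint).const_mul 2) (by norm_num)
    rw [show ((∫ ω, f ω ^ 2 ∂P) - (∫ x, f x ∂P) ^ 2) / (2 * 1)
      = ((∫ ω, f ω ^ 2 ∂P) - (∫ x, f x ∂P) ^ 2) / 2 by norm_num] at base
    refine base.congr' ?_
    filter_upwards [Ioo_mem_nhdsGT_of_mem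
      (show (0:ℝ) ∈ Set.Ico 0 (ε/3) by constructor <;> [rfl; linarith])] with x hx
    rw [myq_eq hf hε hint hx.1 hx.2.le]
    have hZ := hZpos x (habs x hx)
    field_simp
    simp_rw [mul_comm (f _) x]

lemma mymu_lim (hf : Measurable f) (hε : 0 < ε)
    (hint : ∀ t : ℝ, |t| < ε → Integrable (fun ω => Real.exp (t * f ω)) P) :
    Tendsto (fun t : ℝ =>
        ((∫ ω, f ω * Real.exp (t * f ω) ∂P) / (∫ ω, Real.exp (t * f ω) ∂P)
          - (∫ x, f x ∂P)) / t)
      (nhdsWithin 0 (Set.Ioi 0))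
      (nhds ((∫ ω, f ω ^ 2 ∂P) - (∫ x, f x ∂P) ^ 2)) := by
  have base : Tendsto (fun x : ℝ =>
      (∫ ω, (f ω - (∫ x, f x ∂P)) * ((Real.exp (x * f ω) - 1) / x) ∂P)
        / (∫ ω, Real.exp (x * f ω) ∂P))
      (nhdsWithin 0 (Set.Ioi 0))
      (nhds (((∫ ω, f ω ^ 2 ∂P) - (∫ x, f x ∂P) ^ 2) / 1)) :=
    (myq_lim hf hε hint).div (myZ_lim hf hε hint) one_ne_zero
  rw [div_one] at base
  refine base.congr' ?_
  filter_upwards [Ioo_mem_nhdsGT_of_mem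
    (show (0:ℝ) ∈ Set.Ico 0 (ε/3) by constructor <;> [rfl; linarith])] with x hx
  have hZ : 0 < ∫ ω, Real.exp (x * f ω) ∂P :=
    integral_exp_pos (hint x (by rw [abs_of_pos hx.1]; linarith [hx.2]))
  rw [myq_eq hf hε hint hx.1 hx.2.le]
  field_simp
  simp_rw [mul_comm (f _) x]

lemma myKL_lim (hf : Measurable f) (hε : 0 < ε)
    (hint : ∀ t : ℝ, |t| < ε → Integrable (fun ω => Real.exp (t * f ω)) P) :
    Tendsto (fun t : ℝ =>
        (t * ((∫ ω, f ω * Real.exp (t * f ω) ∂P) / (∫ ω, Real.exp (t * f ω) ∂P))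
          - Real.log (∫ ω, Real.exp (t * f ω) ∂P)) / t ^ 2)
      (nhdsWithin 0 (Set.Ioi 0))
      (nhds (((∫ ω, f ω ^ 2 ∂P) - (∫ x, f x ∂P) ^ 2) / 2)) := by
  have base := (mymu_lim hf hε hint).sub (myLam_lim hf hε hint)
  rw [show ((∫ ω, f ω ^ 2 ∂P) - (∫ x, f x ∂P) ^ 2)
      - ((∫ ω, f ω ^ 2 ∂P) - (∫ x, f x ∂P) ^ 2) / 2
      = ((∫ ω, f ω ^ 2 ∂P) - (∫ x, f x ∂P) ^ 2) / 2 by ring] at base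
  refine base.congr' ?_
  filter_upwards [self_mem_nhdsWithin] with t ht
  have ht0 : t ≠ 0 := ne_of_gt ht
  field_simp
  ring

end Limits2
section Deg

variable {Ω : Type*} [MeasurableSpace Ω] {P : MeasureTheory.Measure Ω}
  [MeasureTheory.IsProbabilityMeasure P] {f : Ω → ℝ} {ε : ℝ}

open MeasureTheory ProbabilityTheory Filter Real

lemma myvar (hf : Measurable f) (hε : 0 < ε)
    (hint : ∀ t : ℝ, |t| < ε → Integrable (fun ω => Real.exp (t * f ω)) P) :
    variance f P = (∫ ω, f ω ^ 2 ∂P) - (∫ x, f x ∂P) ^ 2 := by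
  have h := variance_eq_sub (mymem2 hf hε hint)
  simpa using h

lemma myae_const (hf : Measurable f) (hε : 0 < ε)
    (hint : ∀ t : ℝ, |t| < ε → Integrable (fun ω => Real.exp (t * f ω)) P)
    (hV : variance f P = 0) : f =ᵐ[P] fun _ => ∫ x, f x ∂P := by
  have h2 := mymem2 hf hε hint
  have hev : evariance f P = 0 := by
    have hlt := h2.evariance_lt_top
    rw [variance, ENNReal.toReal_eq_zero_iff] at hV
    rcases hV with h | h
    · exact h
    · exact absurd h hlt.ne
  exact (evariance_eq_zero_iff hf.aemeasurable).1 hev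

lemma myrobust_const (hf : Measurable f) (hε : 0 < ε)
    (hint : ∀ t : ℝ, |t| < ε → Integrable (fun ω => Real.exp (t * f ω)) P)
    (hV : variance f P = 0) {C : ℝ} (hC : 0 < C) :
    robustValue P f C = ∫ x, f x ∂P := by
  have hae := myae_const hf hε hint hV
  have hset : { x : ℝ | ∃ Q : MeasureTheory.Measure Ω, IsProbabilityMeasure Q ∧ Q ≪ P ∧
      klDiv Q P ≤ (C : EReal) ∧ x = ∫ ω, f ω ∂Q } = {∫ x, f x ∂P} := by
    ext x
    simp only [Set.mem_setOf_eq, Set.mem_singleton_iff]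
    constructor
    · rintro ⟨Q, hQprob, hQP, _, rfl⟩
      have haeQ : f =ᵐ[Q] fun _ => ∫ x, f x ∂P := hae.filter_mono hQP.ae_le
      rw [integral_congr_ae haeQ, integral_const, probReal_univ]
      simp
    · rintro rfl
      exact my_mem_self hC.le
  rw [robustValue, hset, csSup_singleton]

end Deg

lemma mysqrt_tendsto {κ : ℝ} (hκ : 0 < κ) :
    Filter.Tendsto (fun C : ℝ => κ * Real.sqrt C) (nhdsWithin 0 (Set.Ioi 0))
      (nhdsWithin 0 (Set.Ioi 0)) := by
  rw [tendsto_nhdsWithin_iff]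
  constructor
  · have h : Filter.Tendsto (fun C : ℝ => κ * Real.sqrt C) (nhds 0)
        (nhds (κ * Real.sqrt 0)) := (continuous_const.mul Real.continuous_sqrt).tendsto 0
    simpa using h.mono_left nhdsWithin_le_nhds
  · filter_upwards [self_mem_nhdsWithin] with C hC
    exact mul_pos hκ (Real.sqrt_pos.2 hC)


/-- Sharp small-KL expansion: `S_f(C) = m + √(2 Var_P f) √C + o(√C)` as `C ↓ 0`. -/
theorem sharp_small_KL_expansion {Ω : Type*} [MeasurableSpace Ω] (P : Measure Ω)
    [IsProbabilityMeasure P] (f : Ω → ℝ) (hf : Measurable f)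
    (hmgf : ∃ ε > 0, ∀ t : ℝ, |t| < ε → Integrable (fun ω => Real.exp (t * f ω)) P) :
    Tendsto (fun C : ℝ => (robustValue P f C - ∫ ω, f ω ∂P) / Real.sqrt C)
      (nhdsWithin 0 (Set.Ioi 0)) (nhds (Real.sqrt (2 * variance f P))) := by
  obtain ⟨ε, hε, hint⟩ := hmgf
  have hvar := myvar hf hε hint
  by_cases hV0 : variance f P = 0
  · rw [hV0]
    simp only [mul_zero, Real.sqrt_zero]
    refine Tendsto.congr' ?_ tendsto_const_nhds
    filter_upwards [self_mem_nhdsWithin] with C hC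
    rw [myrobust_const hf hε hint hV0 hC]
    simp
  · set m := ∫ ω, f ω ∂P with hm
    set V := (∫ ω, f ω ^ 2 ∂P) - m ^ 2 with hVdef
    have hVpos : 0 < V :=
      lt_of_le_of_ne (hvar ▸ variance_nonneg f P) (fun h => hV0 (by rw [hvar, ← h]))
    rw [hvar]
    set s := Real.sqrt (2 * V) with hs
    have hspos : 0 < s := Real.sqrt_pos.2 (by linarith)
    set c := Real.sqrt (2 / V) with hcdef
    have hcpos : 0 < c := Real.sqrt_pos.2 (by positivity)
    have hc2 : c ^ 2 = 2 / V := Real.sq_sqrt (by positivity)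
    have id3 : c ^ 2 * (V / 2) = 1 := by rw [hc2]; field_simp
    have id2 : c * V = s := by
      rw [hcdef, hs, show V = Real.sqrt (V ^ 2) from (Real.sqrt_sq hVpos.le).symm,
        ← Real.sqrt_mul (by positivity)]
      rw [Real.sqrt_sq hVpos.le]
      congr 1
      field_simp
    have id1 : 1 / c + c * (V / 2) = s := by
      have h1 : c * (V / 2) = 1 / c := by rw [eq_div_iff hcpos.ne']; nlinarith [id3]
      have h3 : ((1:ℝ) + 1) / c = c * V := by rw [div_eq_iff hcpos.ne']; nlinarith [id3]
      rw [h1, ← add_div, h3, id2]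
    refine tendsto_order.2 ⟨?_, ?_⟩
    · -- lower bound
      intro l hl
      rcases lt_or_ge l 0 with hl0 | hl0
      · filter_upwards [self_mem_nhdsWithin] with C hC
        have hSm : m ≤ robustValue P f C :=
          le_csSup (my_bdd hf hε hint C) (my_mem_self hC.le)
        have : (0:ℝ) ≤ (robustValue P f C - m) / Real.sqrt C :=
          div_nonneg (sub_nonneg.2 hSm) (Real.sqrt_nonneg C)
        linarith
      · set θ := (l + s) / (2 * s) with hθ
        have hθpos : 0 < θ := div_pos (by linarith) (by linarith)
        have hθ1 : θ < 1 := by rw [hθ, div_lt_one (by linarith)]; linarith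
        have hθs : θ * s = (l + s) / 2 := by rw [hθ]; field_simp
        have hθl : l < θ * s := by rw [hθs]; linarith
        have hts := mysqrt_tendsto (mul_pos hθpos hcpos)
        have hts' : Filter.Tendsto (fun C : ℝ => θ * c * Real.sqrt C)
            (nhdsWithin 0 (Set.Ioi 0)) (nhdsWithin 0 (Set.Ioi 0)) := hts
        have hcomp : Tendsto (fun C : ℝ =>
            ((∫ ω, f ω * Real.exp ((θ * c * Real.sqrt C) * f ω) ∂P)
              / (∫ ω, Real.exp ((θ * c * Real.sqrt C) * f ω) ∂P) - m)
              / (θ * c * Real.sqrt C))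
            (nhdsWithin 0 (Set.Ioi 0)) (nhds V) := (mymu_lim hf hε hint).comp hts'
        have hχ := hcomp.mul_const (θ * c)
        have hVθc : l < V * (θ * c) := by
          have h4 : V * (θ * c) = θ * s := by rw [← id2]; ring
          rw [h4]; exact hθl
        have hev1 := hχ.eventually_const_lt hVθc
        have hev2 : ∀ᶠ C in nhdsWithin (0:ℝ) (Set.Ioi 0),
            θ * c * Real.sqrt C ∈ Set.Ioo 0 (ε/3) :=
          hts'.eventually_mem (Ioo_mem_nhdsGT_of_mem
            (show (0:ℝ) ∈ Set.Ico 0 (ε/3) by constructor <;> [rfl; linarith]))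
        have hKLcomp : Tendsto (fun C : ℝ =>
            ((θ * c * Real.sqrt C) * ((∫ ω, f ω * Real.exp ((θ * c * Real.sqrt C) * f ω) ∂P)
              / (∫ ω, Real.exp ((θ * c * Real.sqrt C) * f ω) ∂P))
              - Real.log (∫ ω, Real.exp ((θ * c * Real.sqrt C) * f ω) ∂P))
              / (θ * c * Real.sqrt C) ^ 2)
            (nhdsWithin 0 (Set.Ioi 0)) (nhds (V / 2)) := (myKL_lim hf hε hint).comp hts'
        have hKLmul := hKLcomp.mul_const ((θ * c) ^ 2)
        have hlim2 : V / 2 * (θ * c) ^ 2 = θ ^ 2 := by linear_combination θ ^ 2 * id3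
        rw [hlim2] at hKLmul
        have hθsq : θ ^ 2 < 1 := by nlinarith
        have hevKL := hKLmul.eventually_lt_const hθsq
        filter_upwards [self_mem_nhdsWithin, hev1, hev2, hevKL] with C hC h1 h2 h3
        have hC' : (0:ℝ) < C := hC
        have hsqC : 0 < Real.sqrt C := Real.sqrt_pos.2 hC'
        set t := θ * c * Real.sqrt C with htdef
        have ht0 : 0 < t := h2.1
        have htε : t ≤ ε/3 := h2.2.le
        have ht2 : t ^ 2 = (θ * c) ^ 2 * C := by
          rw [htdef, mul_pow, Real.sq_sqrt hC'.le]
        set A := ∫ ω, f ω * Real.exp (t * f ω) ∂P with hA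
        set Z := ∫ ω, Real.exp (t * f ω) ∂P with hZ
        set L := Real.log Z with hL
        have hKLle : t * (A / Z) - L ≤ C := by
          have e1 : t * (A / Z) - L = ((t * (A / Z) - L) / t ^ 2) * ((θ * c) ^ 2 * C) := by
            rw [← ht2]; field_simp
          rw [← mul_assoc] at e1
          have e2 := mul_lt_mul_of_pos_right h3 hC'
          rw [one_mul] at e2
          linarith
        have hmem := my_lower hf hε hint ht0 htε hKLle
        have hS := le_csSup (my_bdd hf hε hint C) hmem
        have hχeq : (A / Z - m) / t * (θ * c) = (A / Z - m) / Real.sqrt C := by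
          rw [htdef]
          rw [div_mul_eq_mul_div, div_mul_eq_mul_div]
          rw [div_eq_div_iff (by positivity) hsqC.ne']
          ring
        rw [hχeq] at h1
        have hfinal : (A / Z - m) / Real.sqrt C ≤ (robustValue P f C - m) / Real.sqrt C := by
          gcongr
          exact hS
        linarith
    · -- upper bound
      intro u hu
      have hts := mysqrt_tendsto hcpos
      have hψbase : Tendsto (fun C : ℝ =>
          (Real.log (∫ ω, Real.exp ((c * Real.sqrt C) * f ω) ∂P) - m * (c * Real.sqrt C))
            / (c * Real.sqrt C) ^ 2)
          (nhdsWithin 0 (Set.Ioi 0)) (nhds (V / 2)) := (myLam_lim hf hε hint).comp hts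
      have hψ := (tendsto_const_nhds (x := 1/c)).add (hψbase.const_mul c)
      rw [show 1/c + c * (V/2) = s from id1] at hψ
      have hev1 := hψ.eventually_lt_const hu
      have hev2 : ∀ᶠ C in nhdsWithin (0:ℝ) (Set.Ioi 0),
          c * Real.sqrt C ∈ Set.Ioo 0 (ε/3) :=
        hts.eventually_mem (Ioo_mem_nhdsGT_of_mem
          (show (0:ℝ) ∈ Set.Ico 0 (ε/3) by constructor <;> [rfl; linarith]))
      filter_upwards [self_mem_nhdsWithin, hev1, hev2] with C hC h1 h2
      have hC' : (0:ℝ) < C := hC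
      have hsqC : 0 < Real.sqrt C := Real.sqrt_pos.2 hC'
      set t := c * Real.sqrt C with htdef
      set Z := ∫ ω, Real.exp (t * f ω) ∂P with hZ
      set L := Real.log Z with hL
      have hS : robustValue P f C ≤ (C + L) / t :=
        csSup_le ⟨m, my_mem_self hC'.le⟩
          (fun x hx => my_upper hf hε hint h2.1 h2.2.le hx)
      have heq : ((C + L) / t - m) / Real.sqrt C
          = 1/c + c * ((L - m * t) / t ^ 2) := by
        rw [htdef]
        obtain ⟨r, hr, hCr⟩ : ∃ r : ℝ, 0 < r ∧ C = r ^ 2 :=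
          ⟨Real.sqrt C, hsqC, (Real.sq_sqrt hC'.le).symm⟩
        rw [hCr, Real.sqrt_sq hr.le]
        field_simp
        ring
      have hfinal : (robustValue P f C - m) / Real.sqrt C
          ≤ ((C + L) / t - m) / Real.sqrt C := by gcongr
      rw [heq] at hfinal
      calc (robustValue P f C - m) / Real.sqrt C ≤ _ := hfinal
      _ < u := h1
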